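/- The function f(r) := ((r²+a²)/Δ(r))·(√(1 − a²Δ(r)/(r²+a²)²) − 1), a priori defined for r > r₊, extends to a real-analytic function on (r₋,∞) (the apparent singularity at Δ = 0 is removable). Consequently, for r > r₊ one has the identity (r−r₊)·e^{−2κ₊·k(r_*(r))} = e^{−2κ₊(r+R₀)}·(r−r₋)^{κ₊/κ₋}·e^{−2κ₊∫_{r₊}^r f(τ)dτ}, and hence the function r ↦ (r−r₊)·e^{−2κ₊·k(r_*(r))} extends to a strictly positive real-analytic function on (r₋,∞); equivalently, the Kruskal-type quantity L = (r−r₊)/(UV), with UV = e^{2κ₊(k(r_*(r))+a·sinθ)}, extends analytically and without zeros across the outer horizon {r = r₊}. -/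

import Mathlib

/-!
STATEMENT 18 (the Kruskal-type quantity extends analytically and without zeros
across the outer horizon).

The function `f(r) = ((r²+a²)/Δ(r))(√(1 − a²Δ(r)/(r²+a²)²) − 1)`, a priori
defined for `r > r₊`, extends to a real-analytic function on `(r₋,∞)`.
Consequently, for `r > r₊`,
`(r−r₊)e^{−2κ₊k(r_*(r))} = e^{−2κ₊(r+R₀)}(r−r₋)^{κ₊/κ₋}e^{−2κ₊∫_{r₊}^r f}`,
and the function `r ↦ (r−r₊)e^{−2κ₊k(r_*(r))}` extends to a strictly positive
real-analytic function on `(r₋,∞)`.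
-/

noncomputable section
open Real Set

namespace Stmt18

lemma analyticAt_rlog {x : ℝ} (hx : 0 < x) : AnalyticAt ℝ Real.log x := by
  have h1 : AnalyticAt ℝ (fun t : ℝ => (Complex.log (t : ℂ)).re) x := by
    have h2 : AnalyticAt ℝ (fun t : ℝ => Complex.log (t : ℂ)) x :=
      ((analyticAt_clog (by simp [Complex.mem_slitPlane_iff, hx])).restrictScalars).comp
        (Complex.ofRealCLM.analyticAt x)
    exact (Complex.reCLM.analyticAt _).comp h2
  refine h1.congr ?_
  filter_upwards with t
  rw [Complex.log_re, Complex.norm_real, Real.norm_eq_abs, Real.log_abs]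

lemma analyticAt_rsqrt {x : ℝ} (hx : 0 < x) : AnalyticAt ℝ Real.sqrt x := by
  have h1 : AnalyticAt ℝ (fun t : ℝ => Real.exp (Real.log t * (1/2))) x :=
    analyticAt_rexp.comp ((analyticAt_rlog hx).mul analyticAt_const)
  refine h1.congr ?_
  filter_upwards [eventually_gt_nhds hx] with t ht
  rw [← Real.rpow_def_of_pos ht, ← Real.sqrt_eq_rpow]

set_option maxHeartbeats 1000000 in
open FormalMultilinearSeries in
lemma exists_analytic_primitive {g : ℝ → ℝ} {x₀ : ℝ} (hg : AnalyticAt ℝ g x₀) :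
    ∃ h : ℝ → ℝ, AnalyticAt ℝ h x₀ ∧ ∀ᶠ x in nhds x₀, HasDerivAt h (g x) x := by
  obtain ⟨p, hp⟩ := hg
  obtain ⟨r, hpr⟩ := hp
  set c : ℕ → ℝ := fun n => p.coeff (n - 1) / n with hc
  set q := FormalMultilinearSeries.ofScalars ℝ c with hqdef
  have hcoe : ∀ m : ℕ, |p.coeff m| ≤ ‖p m‖ := by
    intro m
    have h0 : p.coeff m = p m (fun _ => 1) := by
      rw [p.apply_eq_pow_smul_coeff]; simp
    rw [h0]
    calc ‖p m (fun _ => (1:ℝ))‖ ≤ ‖p m‖ * ∏ _i : Fin m, ‖(1:ℝ)‖ :=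
          (p m).le_opNorm _
      _ = ‖p m‖ := by simp
  have hle : r ≤ q.radius := by
    refine ENNReal.le_of_forall_nnreal_lt (fun r' hr' => ?_)
    obtain ⟨C, hC, hbound⟩ := p.norm_mul_pow_le_of_lt_radius (lt_of_lt_of_le hr' hpr.r_le)
    refine q.le_radius_of_bound (C * r') (fun n => ?_)
    have hqn : ‖q n‖ = |c n| := by
      rw [hqdef, FormalMultilinearSeries.ofScalars_norm]; exact Real.norm_eq_abs _
    match n with
    | 0 =>
      rw [hqn]
      simp only [hc]
      norm_num
      positivity
    | (m+1) =>
      rw [hqn]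
      have h1 : |c (m+1)| ≤ ‖p m‖ := by
        have he : c (m+1) = p.coeff m / ((m:ℝ)+1) := by simp [hc]
        rw [he, abs_div, abs_of_nonneg (by positivity : (0:ℝ) ≤ (m:ℝ)+1)]
        exact (div_le_self (abs_nonneg _) (by norm_num)).trans (hcoe m)
      calc |c (m+1)| * (r':ℝ) ^ (m+1) = |c (m+1)| * (r':ℝ) ^ m * r' := by ring
        _ ≤ ‖p m‖ * (r':ℝ) ^ m * r' := by
            apply mul_le_mul_of_nonneg_right _ r'.coe_nonneg
            exact mul_le_mul_of_nonneg_right h1 (by positivity)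
        _ ≤ C * r' := mul_le_mul_of_nonneg_right (hbound m) r'.coe_nonneg
  have hq0 : 0 < q.radius := lt_of_lt_of_le hpr.r_pos hle
  have hqball := q.hasFPowerSeriesOnBall hq0
  set h : ℝ → ℝ := fun x => q.sum (x - x₀) with hh
  have hq : HasFPowerSeriesOnBall h q x₀ r := by
    refine ⟨hle, hpr.r_pos, fun {y} hy => ?_⟩
    have hy' : y ∈ EMetric.ball (0:ℝ) q.radius :=
      EMetric.ball_subset_ball hle hy
    have := hqball.hasSum hy'
    simpa [hh] using this
  have hd := hq.fderiv
  have hderiv_eq : ∀ y ∈ EMetric.ball (0:ℝ) r, deriv h (x₀ + y) = g (x₀ + y) := by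
    intro y hy
    rcases eq_or_ne y 0 with rfl | hy0
    · have h1 : deriv h x₀ = q.coeff 1 := hq.hasFPowerSeriesAt.deriv
      have h2 : q.coeff 1 = c 1 := by
        show q 1 (fun _ => (1:ℝ)) = c 1
        rw [hqdef, FormalMultilinearSeries.ofScalars_apply_eq]
        norm_num
      have h3 : c 1 = p.coeff 0 := by simp [hc]
      have h4 : p.coeff 0 = g x₀ := hpr.hasFPowerSeriesAt.coeff_zero (fun _ => 1)
      simpa using h1.trans (h2.trans (h3.trans h4))
    · have hsum1 : HasSum (fun n => q.derivSeries n (fun _ => y)) (fderiv ℝ h (x₀ + y)) :=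
        hd.hasSum hy
      have hsum2 := (ContinuousLinearMap.apply ℝ ℝ y).hasSum hsum1
      simp only [ContinuousLinearMap.apply_apply] at hsum2
      have hterm : ∀ n, q.derivSeries n (fun _ => y) y = p.coeff n * y ^ (n+1) := by
        intro n
        rw [q.derivSeries_apply_diag, hqdef, FormalMultilinearSeries.ofScalars_apply_eq]
        have hcn : c (n+1) = p.coeff n / ((n:ℝ)+1) := by simp [hc]
        have hne : ((n:ℝ)+1) ≠ 0 := by positivity
        rw [hcn, nsmul_eq_mul, smul_eq_mul]
        push_cast
        field_simp
      have hsum2' : HasSum (fun n => p.coeff n * y ^ (n+1)) (fderiv ℝ h (x₀ + y) y) := by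
        simpa only [hterm] using hsum2
      have hsum3 : HasSum (fun n => p n (fun _ => y)) (g (x₀ + y)) := hpr.hasSum hy
      have hsum3' : HasSum (fun n => p.coeff n * y ^ (n+1)) (g (x₀ + y) * y) := by
        have h5 := hsum3.mul_right y
        have hfun : (fun n => p n (fun _ => y) * y) = fun n => p.coeff n * y ^ (n+1) := by
          funext n
          rw [p.apply_eq_pow_smul_coeff]
          simp only [smul_eq_mul]
          ring
        rwa [hfun] at h5
      have h6 : fderiv ℝ h (x₀ + y) y = y * deriv h (x₀ + y) := by
        conv_lhs => rw [show y = y • (1:ℝ) by simp]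
        rw [map_smul, fderiv_apply_one_eq_deriv]
        simp
      have h7 : y * deriv h (x₀ + y) = y * g (x₀ + y) := by
        rw [← h6, hsum2'.unique hsum3']
        ring
      exact mul_left_cancel₀ hy0 h7
  refine ⟨h, hq.analyticAt, ?_⟩
  have hball : EMetric.ball x₀ r ∈ nhds x₀ := EMetric.ball_mem_nhds _ hpr.r_pos
  filter_upwards [hball] with x hx
  have hda : DifferentiableAt ℝ h x := (hq.analyticAt_of_mem hx).differentiableAt
  have hdx : deriv h x = g x := by
    have hy : x - x₀ ∈ Metric.eball (0:ℝ) r := by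
      simpa [Metric.mem_eball, edist_dist, Real.dist_eq] using (show x ∈ Metric.eball x₀ r from hx)
    simpa using hderiv_eq (x - x₀) hy
  exact hdx ▸ hda.hasDerivAt

lemma analyticAt_integral_primitive {b c : ℝ} {g : ℝ → ℝ}
    (hg : AnalyticOnNhd ℝ g (Set.Ioi b)) (hc : b < c) {x₀ : ℝ} (hx₀ : b < x₀) :
    AnalyticAt ℝ (fun x => ∫ τ in c..x, g τ) x₀ := by
  obtain ⟨h, hha, hhd⟩ := exists_analytic_primitive (hg x₀ hx₀)
  have hcont : ContinuousOn g (Set.Ioi b) := hg.continuousOn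
  -- F has derivative g on Ioi b
  have hF : ∀ x ∈ Set.Ioi b, HasDerivAt (fun x => ∫ τ in c..x, g τ) (g x) x := by
    intro x hx
    have hsub : Set.uIcc c x ⊆ Set.Ioi b := by
      intro t ht
      rcases Set.mem_uIcc.1 ht with ⟨h1, _⟩ | ⟨h1, _⟩
      · exact lt_of_lt_of_le hc h1
      · exact lt_of_lt_of_le hx h1
    have hint : IntervalIntegrable g MeasureTheory.volume c x :=
      (hcont.mono hsub).intervalIntegrable
    have hmeas : StronglyMeasurableAtFilter g (nhds x) MeasureTheory.volume :=
      hcont.stronglyMeasurableAtFilter isOpen_Ioi x hx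
    exact intervalIntegral.integral_hasDerivAt_right hint hmeas
      ((hg x hx).continuousAt)
  -- choose a ball where both F and h have derivative g
  have hmem : {x | HasDerivAt h (g x) x} ∩ Set.Ioi b ∈ nhds x₀ :=
    Filter.inter_mem hhd (isOpen_Ioi.mem_nhds hx₀)
  obtain ⟨ε, hε, hball⟩ := Metric.mem_nhds_iff.1 hmem
  set F : ℝ → ℝ := fun x => ∫ τ in c..x, g τ with hFdef
  have hconst : ∀ x ∈ Metric.ball x₀ ε, F x - h x = F x₀ - h x₀ := by
    intro x hx
    have hdiff : DifferentiableOn ℝ (fun x => F x - h x) (Metric.ball x₀ ε) := by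
      intro z hz
      obtain ⟨hz1, hz2⟩ := hball hz
      exact ((hF z hz2).sub hz1).differentiableAt.differentiableWithinAt
    refine Convex.is_const_of_fderivWithin_eq_zero (convex_ball x₀ ε) hdiff ?_ hx
      (Metric.mem_ball_self hε)
    intro z hz
    obtain ⟨hz1, hz2⟩ := hball hz
    have hzero : HasDerivAt (fun x => F x - h x) 0 z := by
      have h0 := (hF z hz2).sub hz1; rw [sub_self] at h0; exact h0
    rw [fderivWithin_of_isOpen Metric.isOpen_ball hz]
    have := hzero.hasFDerivAt.fderiv
    rw [this]
    ext
    simp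
  have hev : F =ᶠ[nhds x₀] fun x => h x + (F x₀ - h x₀) := by
    filter_upwards [Metric.ball_mem_nhds x₀ hε] with x hx
    have := hconst x hx
    linarith
  exact ((hha.add analyticAt_const).congr hev.symm)


/-- `Δ(r) = r² − 2Mr + a² + Q²`. -/
def Δ (M a Q r : ℝ) : ℝ := r ^ 2 - 2 * M * r + a ^ 2 + Q ^ 2

/-- Outer horizon `r₊`. -/
def rplus (M a Q : ℝ) : ℝ := M + Real.sqrt (M ^ 2 - (a ^ 2 + Q ^ 2))

/-- Inner horizon `r₋`. -/
def rminus (M a Q : ℝ) : ℝ := M - Real.sqrt (M ^ 2 - (a ^ 2 + Q ^ 2))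

/-- Surface gravity of the outer horizon. -/
def κplus (M a Q : ℝ) : ℝ :=
  (rplus M a Q - rminus M a Q) / (2 * ((rplus M a Q) ^ 2 + a ^ 2))

/-- Surface gravity of the inner horizon. -/
def κminus (M a Q : ℝ) : ℝ :=
  (rplus M a Q - rminus M a Q) / (2 * ((rminus M a Q) ^ 2 + a ^ 2))

/-- The Regge–Wheeler coordinate. -/
def rstar (M a Q R0 r : ℝ) : ℝ :=
  r + (1 / (2 * κplus M a Q)) * Real.log (r - rplus M a Q)
    - (1 / (2 * κminus M a Q)) * Real.log (r - rminus M a Q) + R0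

/-- `f(r) = ((r²+a²)/Δ(r))·(√(1 − a²Δ(r)/(r²+a²)²) − 1)`. -/
def fKN (M a Q r : ℝ) : ℝ :=
  ((r ^ 2 + a ^ 2) / Δ M a Q r)
    * (Real.sqrt (1 - a ^ 2 * Δ M a Q r / (r ^ 2 + a ^ 2) ^ 2) - 1)

/-- `k(r_*(r)) = r_*(r) + ∫_{r₊}^r (√(1−a²Δ/(τ²+a²)²)−1)((τ²+a²)/Δ(τ))dτ
             = r_*(r) + ∫_{r₊}^r f(τ)dτ`. -/
def kofr (M a Q R0 r : ℝ) : ℝ :=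
  rstar M a Q R0 r + ∫ τ in (rplus M a Q)..r, fKN M a Q τ

set_option maxHeartbeats 1000000 in
theorem kruskal_analytic_extension (M a Q R0 : ℝ) (hM : 0 < M) (ha : 0 < a)
    (hsub : a ^ 2 + Q ^ 2 < M ^ 2) :
    -- f extends real-analytically across Δ = 0 to (r₋,∞) …
    ∃ g : ℝ → ℝ,
      AnalyticOnNhd ℝ g (Set.Ioi (rminus M a Q)) ∧
      (∀ r : ℝ, rplus M a Q < r → g r = fKN M a Q r) ∧
      -- … the stated identity holds for r > r₊ …
      (∀ r : ℝ, rplus M a Q < r →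
        (r - rplus M a Q) * Real.exp (-2 * κplus M a Q * kofr M a Q R0 r)
          = Real.exp (-2 * κplus M a Q * (r + R0))
            * (r - rminus M a Q) ^ (κplus M a Q / κminus M a Q)
            * Real.exp (-2 * κplus M a Q * ∫ τ in (rplus M a Q)..r, g τ)) ∧
      -- … and the Kruskal quantity extends analytically, without zeros
      ∃ L : ℝ → ℝ,
        AnalyticOnNhd ℝ L (Set.Ioi (rminus M a Q)) ∧
        (∀ r ∈ Set.Ioi (rminus M a Q), 0 < L r) ∧
        ∀ r : ℝ, rplus M a Q < r →
          L r = (r - rplus M a Q)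
            * Real.exp (-2 * κplus M a Q * kofr M a Q R0 r) := by
  have hs0 : (0:ℝ) ≤ M ^ 2 - (a ^ 2 + Q ^ 2) := by linarith
  set s := Real.sqrt (M ^ 2 - (a ^ 2 + Q ^ 2)) with hs
  have hs2 : s ^ 2 = M ^ 2 - (a ^ 2 + Q ^ 2) := Real.sq_sqrt hs0
  have hspos : 0 < s := Real.sqrt_pos.2 (by linarith)
  have hsM : s < M := by nlinarith [sq_nonneg a, sq_nonneg Q]
  set rp := rplus M a Q with hrp
  set rm := rminus M a Q with hrm
  have hrpv : rp = M + s := by rw [hrp]; rfl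
  have hrmv : rm = M - s := by rw [hrm]; rfl
  have hrm0 : 0 < rm := by rw [hrmv]; linarith
  have hrmp : rm < rp := by rw [hrpv, hrmv]; linarith
  have hΔfac : ∀ r : ℝ, Δ M a Q r = (r - rp) * (r - rm) := by
    intro r
    rw [hrpv, hrmv]
    show r ^ 2 - 2 * M * r + a ^ 2 + Q ^ 2 = _
    nlinarith [hs2]
  have hκp : 0 < κplus M a Q := by
    rw [show κplus M a Q = (rp - rm) / (2 * (rp ^ 2 + a ^ 2)) from rfl]
    apply div_pos (by linarith) (by positivity)
  have hκm : 0 < κminus M a Q := by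
    rw [show κminus M a Q = (rp - rm) / (2 * (rm ^ 2 + a ^ 2)) from rfl]
    apply div_pos (by linarith) (by positivity)
  set κp := κplus M a Q with hκpd
  set κm := κminus M a Q with hκmd
  have hQ2 : Q ^ 2 = 2 * M * rm - rm ^ 2 - a ^ 2 := by
    have h0 := hΔfac rm
    show Q ^ 2 = _
    have : Δ M a Q rm = 0 := by rw [h0]; ring
    rw [show Δ M a Q rm = rm ^ 2 - 2 * M * rm + a ^ 2 + Q ^ 2 from rfl] at this
    linarith
  -- positivity of the expression under the square root
  have hEpos : ∀ r : ℝ, rm < r → 0 < 1 - a ^ 2 * Δ M a Q r / (r ^ 2 + a ^ 2) ^ 2 := by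
    intro r hr
    have hden : (0:ℝ) < (r ^ 2 + a ^ 2) ^ 2 := by positivity
    rw [sub_pos, div_lt_one hden]
    rw [show Δ M a Q r = r ^ 2 - 2 * M * r + a ^ 2 + Q ^ 2 from rfl, hQ2]
    nlinarith [mul_nonneg (mul_nonneg hM.le (sq_nonneg a)) (sub_pos.2 hr).le,
      sq_nonneg (r ^ 2), sq_nonneg (a * r), sq_nonneg (a * rm), pow_pos ha 4]
  -- the extension g
  set g : ℝ → ℝ := fun r =>
    -(a ^ 2) / ((r ^ 2 + a ^ 2) * (Real.sqrt (1 - a ^ 2 * Δ M a Q r / (r ^ 2 + a ^ 2) ^ 2) + 1))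
    with hgdef
  have hdenpos : ∀ r : ℝ,
      0 < (r ^ 2 + a ^ 2) * (Real.sqrt (1 - a ^ 2 * Δ M a Q r / (r ^ 2 + a ^ 2) ^ 2) + 1) := by
    intro r
    have h1 : (0:ℝ) ≤ Real.sqrt (1 - a ^ 2 * Δ M a Q r / (r ^ 2 + a ^ 2) ^ 2) :=
      Real.sqrt_nonneg _
    positivity
  have hΔanal : ∀ r : ℝ, AnalyticAt ℝ (fun t => Δ M a Q t) r := by
    intro r
    show AnalyticAt ℝ (fun t => t ^ 2 - 2 * M * t + a ^ 2 + Q ^ 2) r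
    exact ((((analyticAt_id).pow 2).sub (analyticAt_const.mul analyticAt_id)).add
      analyticAt_const).add analyticAt_const
  have hEanal : ∀ r : ℝ, AnalyticAt ℝ
      (fun t => 1 - a ^ 2 * Δ M a Q t / (t ^ 2 + a ^ 2) ^ 2) r := by
    intro r
    refine analyticAt_const.sub (AnalyticAt.div ?_ ?_ ?_)
    · exact analyticAt_const.mul (hΔanal r)
    · exact ((analyticAt_id.pow 2).add analyticAt_const).pow 2
    · positivity
  have hganal : AnalyticOnNhd ℝ g (Set.Ioi rm) := by
    intro r hr
    rw [hgdef]
    refine AnalyticAt.div analyticAt_const ?_ (hdenpos r).ne'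
    refine ((analyticAt_id.pow 2).add analyticAt_const).mul ?_
    have hcomp := AnalyticAt.comp (g := Real.sqrt)
      (f := fun t => 1 - a ^ 2 * Δ M a Q t / (t ^ 2 + a ^ 2) ^ 2)
      (analyticAt_rsqrt (hEpos r hr)) (hEanal r)
    exact hcomp.add analyticAt_const
  have hgf : ∀ r : ℝ, rp < r → g r = fKN M a Q r := by
    intro r hr
    have hrrm : rm < r := hrmp.trans hr
    have hΔpos : 0 < Δ M a Q r := by
      rw [hΔfac]; exact mul_pos (sub_pos.2 hr) (sub_pos.2 hrrm)
    have hE := hEpos r hrrm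
    set u := Real.sqrt (1 - a ^ 2 * Δ M a Q r / (r ^ 2 + a ^ 2) ^ 2) with hu
    have hu2 : u ^ 2 = 1 - a ^ 2 * Δ M a Q r / (r ^ 2 + a ^ 2) ^ 2 := Real.sq_sqrt hE.le
    have hu0 : (0:ℝ) ≤ u := Real.sqrt_nonneg _
    have hden1 : (r ^ 2 + a ^ 2) ≠ 0 := by positivity
    have hden2 : u + 1 ≠ 0 := by positivity
    rw [hgdef]
    show -(a ^ 2) / ((r ^ 2 + a ^ 2) * (u + 1)) = ((r ^ 2 + a ^ 2) / Δ M a Q r) * (u - 1)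
    have hkey : u ^ 2 * (r ^ 2 + a ^ 2) ^ 2 = (r ^ 2 + a ^ 2) ^ 2 - a ^ 2 * Δ M a Q r := by
      rw [hu2]; field_simp
    field_simp
    nlinarith [hkey, hΔpos, sq_nonneg u]
  have hIeq : ∀ r : ℝ, rp < r →
      (∫ τ in rp..r, fKN M a Q τ) = ∫ τ in rp..r, g τ := by
    intro r hr
    apply intervalIntegral.integral_congr_ae
    refine MeasureTheory.ae_of_all _ (fun x hx => ?_)
    rw [Set.uIoc_of_le hr.le] at hx
    exact (hgf x hx.1).symm
  have hkey : ∀ r : ℝ, rp < r →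
      (r - rp) * Real.exp (-2 * κp * kofr M a Q R0 r)
        = Real.exp (-2 * κp * (r + R0)) * Real.exp ((κp / κm) * Real.log (r - rm))
          * Real.exp (-2 * κp * ∫ τ in rp..r, g τ) := by
    intro r hr
    have h1 : kofr M a Q R0 r = r + (1 / (2 * κp)) * Real.log (r - rp)
        - (1 / (2 * κm)) * Real.log (r - rm) + R0 + ∫ τ in rp..r, g τ := by
      rw [show kofr M a Q R0 r = rstar M a Q R0 r + ∫ τ in rp..r, fKN M a Q τ from rfl,
        show rstar M a Q R0 r = r + (1 / (2 * κp)) * Real.log (r - rp)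
          - (1 / (2 * κm)) * Real.log (r - rm) + R0 from rfl,
        hIeq r hr]
    have hexp : -2 * κp * kofr M a Q R0 r
        = (-2 * κp * (r + R0)) + (-(Real.log (r - rp))) + ((κp / κm) * Real.log (r - rm))
          + (-2 * κp * ∫ τ in rp..r, g τ) := by
      rw [h1]
      field_simp
      ring
    rw [hexp, Real.exp_add, Real.exp_add, Real.exp_add, Real.exp_neg,
      Real.exp_log (sub_pos.2 hr)]
    have hne : r - rp ≠ 0 := (sub_pos.2 hr).ne'
    field_simp
  refine ⟨g, hganal, hgf, ?_, ?_⟩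
  · intro r hr
    rw [hkey r hr, Real.rpow_def_of_pos (sub_pos.2 (hrmp.trans hr)),
      mul_comm (Real.log (r - rm)) (κp / κm)]
  · refine ⟨fun r => Real.exp (-2 * κp * (r + R0)) * Real.exp ((κp / κm) * Real.log (r - rm))
      * Real.exp (-2 * κp * ∫ τ in rp..r, g τ), ?_, ?_, ?_⟩
    · intro r hr
      refine AnalyticAt.mul (AnalyticAt.mul ?_ ?_) ?_
      · exact analyticAt_rexp.comp (analyticAt_const.mul (analyticAt_id.add analyticAt_const))
      · refine analyticAt_rexp.comp (analyticAt_const.mul ?_)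
        exact AnalyticAt.comp (g := Real.log) (f := fun t => t - rm)
          (analyticAt_rlog (sub_pos.2 hr)) (analyticAt_id.sub analyticAt_const)
      · exact analyticAt_rexp.comp
          (analyticAt_const.mul (analyticAt_integral_primitive hganal hrmp hr))
    · intro r _
      positivity
    · intro r hr
      exact (hkey r hr).symm


end Stmt18
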